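/- There exists a signed graph (G,σ) whose underlying graph G contains none of P₄ (the path on 4 vertices), P₃ + P₂ (the disjoint union of a path on 3 vertices and an edge), and P₂ + P₂ + P₂ (the disjoint union of three edges) as an induced subgraph, yet ψ(G,σ) > ω(G,σ) and ψ(G,σ) > χ(G,σ); in particular, (G,σ) is neither (ψ,ω)-perfect nor (ψ,χ)-perfect. -/

import Mathlib

open SimpleGraph

set_option maxRecDepth 10000

/-- A signature on a graph: a symmetric assignment of signs (`1` or `-1`) to pairs of
vertices (only the values on edges are relevant). -/
def IsSignature {V : Type*} (σ : V → V → ℤ) : Prop :=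
  (∀ u v, σ u v = σ v u) ∧ (∀ u v, σ u v = 1 ∨ σ u v = -1)

/-- `σ'` is obtained from `σ` by switching a set of vertices: every vertex gets a
switching value `±1`, and the sign of an edge is multiplied by the values at its ends. -/
def SwitchEquiv {V : Type*} (σ σ' : V → V → ℤ) : Prop :=
  ∃ s : V → ℤ, (∀ v, s v = 1 ∨ s v = -1) ∧ ∀ u v, σ' u v = s u * s v * σ u v

/-- The colour set `M_k`, as a set of integers: `{±1, …, ±n}` if `k = 2n`, and
`{-n, …, -1, 0, 1, …, n}` if `k = 2n+1` (colour `±0` is represented by `0`). -/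
def colourSet (k : ℕ) : Set ℤ :=
  if Even k then {i | i ≠ 0 ∧ i.natAbs ≤ k / 2} else {i | i.natAbs ≤ k / 2}

/-- A proper `k`-colouring of the signed graph `(G, σ)`: colours come from `M_k` and,
for each edge `uv`, `φ u ≠ σ(uv) · φ v`. -/
def IsProperColouring {V : Type*} (G : SimpleGraph V) (σ : V → V → ℤ) (k : ℕ)
    (φ : V → ℤ) : Prop :=
  (∀ v, φ v ∈ colourSet k) ∧ ∀ u v, G.Adj u v → φ u ≠ σ u v * φ v

/-- The sign of an integer for the purpose of switching: `-1` for negative colours,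
`1` otherwise. -/
def isgn (x : ℤ) : ℤ := if x < 0 then -1 else 1

/-- The sign of the edge `uv` after switching every vertex whose colour is negative. -/
def redSign {V : Type*} (σ : V → V → ℤ) (φ : V → ℤ) (u v : V) : ℤ :=
  isgn (φ u) * isgn (φ v) * σ u v

/-- After switching all negatively-coloured vertices and taking absolute values of
colours, there is an edge of `(G, σ)` whose ends get values `i` and `j` and whose
resulting sign is `s`. -/
def HasEdgeType {V : Type*} (G : SimpleGraph V) (σ : V → V → ℤ) (φ : V → ℤ)
    (i j : ℕ) (s : ℤ) : Prop :=
  ∃ u v, G.Adj u v ∧ (φ u).natAbs = i ∧ (φ v).natAbs = j ∧ redSign σ φ u v = s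

/-- A complete `k`-colouring of the signed graph `(G, σ)`. -/
def IsCompleteColouring {V : Type*} (G : SimpleGraph V) (σ : V → V → ℤ) (k : ℕ)
    (φ : V → ℤ) : Prop :=
  IsProperColouring G σ k φ ∧
  (∀ i j : ℕ, (i : ℤ) ∈ colourSet k → (j : ℤ) ∈ colourSet k → i ≠ j →
    HasEdgeType G σ φ i j 1 ∧ HasEdgeType G σ φ i j (-1)) ∧
  (∀ i : ℕ, 1 ≤ i → (i : ℤ) ∈ colourSet k → HasEdgeType G σ φ i i (-1))

/-- Some signed graph equivalent to `(G, σ)` admits a complete `k`-colouring. -/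
def AdmitsComplete {V : Type*} (G : SimpleGraph V) (σ : V → V → ℤ) (k : ℕ) : Prop :=
  ∃ σ', IsSignature σ' ∧ SwitchEquiv σ σ' ∧ ∃ φ, IsCompleteColouring G σ' k φ

/-- The achromatic number of the signed graph `(G, σ)`: the largest `k` such that some
signed graph equivalent to `(G, σ)` admits a complete `k`-colouring. -/
noncomputable def psi {V : Type*} (G : SimpleGraph V) (σ : V → V → ℤ) : ℕ :=
  sSup {k | AdmitsComplete G σ k}

/-- The chromatic number of the signed graph `(G, σ)`: the smallest `k` such that
`(G, σ)` admits a proper `k`-colouring. -/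
noncomputable def chi {V : Type*} (G : SimpleGraph V) (σ : V → V → ℤ) : ℕ :=
  sInf {k | ∃ φ, IsProperColouring G σ k φ}

/-- The path `P₄` on four vertices. -/
def patP4 : SimpleGraph (Fin 4) := SimpleGraph.pathGraph 4

/-- The disjoint union `P₃ + P₂` of a path on three vertices and an edge. -/
def patP3P2 : SimpleGraph (Fin 5) :=
  SimpleGraph.fromRel (fun i j =>
    (i.val = 0 ∧ j.val = 1) ∨ (i.val = 1 ∧ j.val = 2) ∨ (i.val = 3 ∧ j.val = 4))

/-- The disjoint union `P₂ + P₂ + P₂` of three edges. -/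
def patP2P2P2 : SimpleGraph (Fin 6) :=
  SimpleGraph.fromRel (fun i j =>
    (i.val = 0 ∧ j.val = 1) ∨ (i.val = 2 ∧ j.val = 3) ∨ (i.val = 4 ∧ j.val = 5))

/-- `G` contains an induced copy of the pattern graph `P`. -/
def HasInducedCopy {V : Type*} {m : ℕ} (G : SimpleGraph V) (P : SimpleGraph (Fin m)) :
    Prop :=
  ∃ f : Fin m → V, Function.Injective f ∧ ∀ i j, G.Adj (f i) (f j) ↔ P.Adj i j


/-! ### Auxiliary material for the proof: the "paw" graph with a suitable signature -/

private def pawG : SimpleGraph (Fin 4) := SimpleGraph.fromRel (fun i j =>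
  (i = 0 ∧ j = 1) ∨ (i = 0 ∧ j = 2) ∨ (i = 0 ∧ j = 3) ∨ (i = 2 ∧ j = 3))

private def pawSig : Fin 4 → Fin 4 → ℤ := fun u v =>
  if (u = 0 ∧ v = 1) ∨ (u = 1 ∧ v = 0) ∨ (u = 0 ∧ v = 3) ∨ (u = 3 ∧ v = 0)
     ∨ (u = 2 ∧ v = 3) ∨ (u = 3 ∧ v = 2) then -1 else 1

instance : DecidableRel pawG.Adj := fun a b =>
  decidable_of_iff _ (SimpleGraph.fromRel_adj _ a b).symm

instance : DecidableRel patP4.Adj := fun a b =>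
  decidable_of_iff _ (SimpleGraph.pathGraph_adj).symm

private lemma pawG_adj_cases : ∀ u v : Fin 4, pawG.Adj u v →
    ((u, v) = (0, 1) ∨ (u, v) = (1, 0) ∨ (u, v) = (0, 2) ∨ (u, v) = (2, 0) ∨
     (u, v) = (0, 3) ∨ (u, v) = (3, 0) ∨ (u, v) = (2, 3) ∨ (u, v) = (3, 2)) := by
  decide

private def pawCol : Fin 4 → ℤ := fun x => if x.val ≤ 1 then 1 else 2

section Key

variable {V : Type*} (e : V ≃ Fin 4) (G : SimpleGraph V) (σ : V → V → ℤ)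

private lemma key_clique [Fintype V]
    (hAdj : ∀ u v, G.Adj u v ↔ pawG.Adj (e u) (e v)) : G.cliqueNum ≤ 3 := by
  have hcard : Fintype.card V = 4 := by
    rw [Fintype.card_congr e]; simp
  apply csSup_le'
  rintro n ⟨s, hs⟩
  by_contra hn
  push_neg at hn
  have hcs : s.card = n := hs.2
  have hle : s.card ≤ 4 := by
    have := Finset.card_le_univ s
    rwa [hcard] at this
  have hn4 : n = 4 := by omega
  have hsuniv : s = Finset.univ := by
    apply Finset.eq_univ_of_card
    rw [hcs, hn4, hcard]
  have h1 : e.symm 1 ∈ s := by rw [hsuniv]; exact Finset.mem_univ _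
  have h2 : e.symm 2 ∈ s := by rw [hsuniv]; exact Finset.mem_univ _
  have hne : e.symm 1 ≠ e.symm 2 := by
    intro h; exact absurd (e.symm.injective h) (by decide)
  have hadj := hs.1 h1 h2 hne
  rw [hAdj] at hadj
  simp only [Equiv.apply_symm_apply] at hadj
  exact absurd hadj (by decide)

private lemma key_chi
    (hAdj : ∀ u v, G.Adj u v ↔ pawG.Adj (e u) (e v))
    (hσ : ∀ u v, σ u v = pawSig (e u) (e v)) : chi G σ ≤ 3 := by
  apply Nat.sInf_le
  refine ⟨fun v => if (e v).val = 0 then 0 else 1, ?_, ?_⟩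
  · intro v
    have : ∀ x : Fin 4, ((if x.val = 0 then (0:ℤ) else 1) ∈ colourSet 3) := by
      intro x
      simp only [colourSet, Nat.even_iff]
      norm_num
      split <;> simp
    exact this (e v)
  · intro u v huv
    rw [hσ]
    have h0 := (hAdj u v).1 huv
    exact (by decide :
      ∀ x y : Fin 4, pawG.Adj x y →
        (if x.val = 0 then (0:ℤ) else 1) ≠ pawSig x y * (if y.val = 0 then (0:ℤ) else 1))
      (e u) (e v) h0

private lemma key_admits4
    (hAdj : ∀ u v, G.Adj u v ↔ pawG.Adj (e u) (e v))
    (hσ : ∀ u v, σ u v = pawSig (e u) (e v)) : AdmitsComplete G σ 4 := by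
  have hsig : IsSignature σ := by
    constructor
    · intro u v; rw [hσ, hσ]
      exact (by decide : ∀ x y : Fin 4, pawSig x y = pawSig y x) _ _
    · intro u v; rw [hσ]
      exact (by decide : ∀ x y : Fin 4, pawSig x y = 1 ∨ pawSig x y = -1) _ _
  refine ⟨σ, hsig, ⟨fun _ => 1, fun _ => Or.inl rfl, fun u v => by ring⟩,
    fun v => pawCol (e v), ?_, ?_, ?_⟩
  · constructor
    · intro v
      have : ∀ x : Fin 4, pawCol x ∈ colourSet 4 := by
        intro x
        simp only [colourSet, if_pos (by decide : Even 4)]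
        revert x; decide
      exact this (e v)
    · intro u v huv
      rw [hσ]
      have h0 := (hAdj u v).1 huv
      exact (by decide :
        ∀ x y : Fin 4, pawG.Adj x y → pawCol x ≠ pawSig x y * pawCol y) (e u) (e v) h0
  · -- pairs of distinct colours
    have hw : ∀ x y : Fin 4, pawG.Adj x y →
        HasEdgeType G σ (fun v => pawCol (e v)) (pawCol x).natAbs (pawCol y).natAbs
          (pawSig x y) := by
      intro x y h
      refine ⟨e.symm x, e.symm y, ?_, ?_, ?_, ?_⟩
      · rw [hAdj]; simpa using h
      · simp
      · simp
      · simp only [redSign, hσ, Equiv.apply_symm_apply]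
        have h1 : ∀ z : Fin 4, isgn (pawCol z) = 1 := by decide
        rw [h1, h1, one_mul, one_mul]
    have hmem : ∀ i : ℕ, ((i : ℤ) ∈ colourSet 4) → i = 1 ∨ i = 2 := by
      intro i hi
      simp only [colourSet, if_pos (by decide : Even 4), Set.mem_setOf_eq,
        Int.natAbs_natCast, ne_eq, Nat.cast_eq_zero] at hi
      omega
    intro i j hi hj hij
    rcases hmem i hi with rfl | rfl <;> rcases hmem j hj with rfl | rfl <;>
      first
      | exact absurd rfl hij
      | exact ⟨by simpa [pawCol, pawSig] using hw 0 2 (by decide), by simpa [pawCol, pawSig] using hw 0 3 (by decide)⟩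
      | exact ⟨by simpa [pawCol, pawSig] using hw 2 0 (by decide), by simpa [pawCol, pawSig] using hw 3 0 (by decide)⟩
  · -- negative loops on each colour
    have hw : ∀ x y : Fin 4, pawG.Adj x y →
        HasEdgeType G σ (fun v => pawCol (e v)) (pawCol x).natAbs (pawCol y).natAbs
          (pawSig x y) := by
      intro x y h
      refine ⟨e.symm x, e.symm y, ?_, ?_, ?_, ?_⟩
      · rw [hAdj]; simpa using h
      · simp
      · simp
      · simp only [redSign, hσ, Equiv.apply_symm_apply]
        have h1 : ∀ z : Fin 4, isgn (pawCol z) = 1 := by decide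
        rw [h1, h1, one_mul, one_mul]
    intro i hi1 hi
    have : i = 1 ∨ i = 2 := by
      simp only [colourSet, if_pos (by decide : Even 4), Set.mem_setOf_eq,
        Int.natAbs_natCast, ne_eq, Nat.cast_eq_zero] at hi
      omega
    rcases this with rfl | rfl
    · exact (by simpa [pawCol, pawSig] using hw 0 1 (by decide))
    · exact (by simpa [pawCol, pawSig] using hw 2 3 (by decide))

private lemma six_types
    (hAdj : ∀ u v, G.Adj u v ↔ pawG.Adj (e u) (e v))
    (σ' : V → V → ℤ) (hsym : ∀ u v, σ' u v = σ' v u) (φ : V → ℤ)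
    (a b c : ℕ) (hab : a < b) (hbc : b < c)
    (h1 : HasEdgeType G σ' φ a b 1) (h2 : HasEdgeType G σ' φ a b (-1))
    (h3 : HasEdgeType G σ' φ a c 1) (h4 : HasEdgeType G σ' φ a c (-1))
    (h5 : HasEdgeType G σ' φ b c 1) (h6 : HasEdgeType G σ' φ b c (-1)) : False := by
  classical
  set T : V → V → ℕ × ℕ × ℤ := fun u v =>
    (min (φ u).natAbs (φ v).natAbs, max (φ u).natAbs (φ v).natAbs, redSign σ' φ u v)
    with hT
  have hTsym : ∀ u v, T u v = T v u := by
    intro u v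
    have hr : redSign σ' φ u v = redSign σ' φ v u := by
      simp only [redSign]; rw [hsym u v]; ring
    simp only [hT]
    rw [min_comm, max_comm, hr]
  set S : Finset (ℕ × ℕ × ℤ) :=
    {T (e.symm 0) (e.symm 1), T (e.symm 0) (e.symm 2),
     T (e.symm 0) (e.symm 3), T (e.symm 2) (e.symm 3)} with hS
  have key : ∀ i j s, i < j → HasEdgeType G σ' φ i j s → (i, j, s) ∈ S := by
    rintro i j s hij ⟨u, v, hadj, hu, hv, hs⟩
    have hTuv : T u v = (i, j, s) := by
      simp only [hT, hu, hv, hs, Prod.mk.injEq]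
      refine ⟨min_eq_left hij.le, max_eq_right hij.le, by trivial⟩
    have h0 := (hAdj u v).1 hadj
    have husymm : u = e.symm (e u) := (e.symm_apply_apply u).symm
    have hvsymm : v = e.symm (e v) := (e.symm_apply_apply v).symm
    rcases pawG_adj_cases _ _ h0 with h | h | h | h | h | h | h | h <;>
      (have heu := congrArg Prod.fst h
       have hev := congrArg Prod.snd h
       simp only at heu hev) <;>
      rw [← hTuv, hS] <;>
      simp only [Finset.mem_insert, Finset.mem_singleton] <;>
      [skip; skip; skip; skip; skip; skip; skip; skip]
    · left; rw [husymm, hvsymm, heu, hev]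
    · left; rw [hTsym, husymm, hvsymm, heu, hev]
    · right; left; rw [husymm, hvsymm, heu, hev]
    · right; left; rw [hTsym, husymm, hvsymm, heu, hev]
    · right; right; left; rw [husymm, hvsymm, heu, hev]
    · right; right; left; rw [hTsym, husymm, hvsymm, heu, hev]
    · right; right; right; rw [husymm, hvsymm, heu, hev]
    · right; right; right; rw [hTsym, husymm, hvsymm, heu, hev]
  have hS4 : S.card ≤ 4 := by
    refine le_trans (Finset.card_insert_le _ _) (Nat.succ_le_succ ?_)
    refine le_trans (Finset.card_insert_le _ _) (Nat.succ_le_succ ?_)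
    refine le_trans (Finset.card_insert_le _ _) (Nat.succ_le_succ ?_)
    simp
  have hbig : ({(a, b, (1:ℤ)), (a, b, (-1:ℤ)), (a, c, (1:ℤ)), (a, c, (-1:ℤ)),
      (b, c, (1:ℤ)), (b, c, (-1:ℤ))} : Finset (ℕ × ℕ × ℤ)) ⊆ S := by
    intro x hx
    simp only [Finset.mem_insert, Finset.mem_singleton] at hx
    rcases hx with rfl | rfl | rfl | rfl | rfl | rfl
    · exact key _ _ _ hab h1
    · exact key _ _ _ hab h2
    · exact key _ _ _ (hab.trans hbc) h3
    · exact key _ _ _ (hab.trans hbc) h4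
    · exact key _ _ _ hbc h5
    · exact key _ _ _ hbc h6
  have hcard6 : ({(a, b, (1:ℤ)), (a, b, (-1:ℤ)), (a, c, (1:ℤ)), (a, c, (-1:ℤ)),
      (b, c, (1:ℤ)), (b, c, (-1:ℤ))} : Finset (ℕ × ℕ × ℤ)).card = 6 := by
    rw [Finset.card_insert_of_notMem (by
          intro hx
          simp only [Finset.mem_insert, Finset.mem_singleton, Prod.mk.injEq] at hx
          omega),
        Finset.card_insert_of_notMem (by
          intro hx
          simp only [Finset.mem_insert, Finset.mem_singleton, Prod.mk.injEq] at hx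
          omega),
        Finset.card_insert_of_notMem (by
          intro hx
          simp only [Finset.mem_insert, Finset.mem_singleton, Prod.mk.injEq] at hx
          omega),
        Finset.card_insert_of_notMem (by
          intro hx
          simp only [Finset.mem_insert, Finset.mem_singleton, Prod.mk.injEq] at hx
          omega),
        Finset.card_insert_of_notMem (by
          intro hx
          simp only [Finset.mem_singleton, Prod.mk.injEq] at hx
          omega)]
    rfl
  have := Finset.card_le_card hbig
  rw [hcard6] at this
  omega

private lemma key_not_admits
    (hAdj : ∀ u v, G.Adj u v ↔ pawG.Adj (e u) (e v))
    (k : ℕ) (hk : 5 ≤ k) : ¬ AdmitsComplete G σ k := by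
  rintro ⟨σ', ⟨hsym, -⟩, -, φ, -, h2, -⟩
  rcases Nat.even_or_odd k with he | ho
  · obtain ⟨r, rfl⟩ := he
    have hr : 3 ≤ r := by omega
    have hmem : ∀ i : ℕ, 1 ≤ i → i ≤ r → ((i : ℤ) ∈ colourSet (r + r)) := by
      intro i hi1 hir
      simp only [colourSet, if_pos (by exact ⟨r, rfl⟩ : Even (r + r)),
        Set.mem_setOf_eq, Int.natAbs_natCast, ne_eq, Nat.cast_eq_zero]
      omega
    obtain ⟨p12, n12⟩ := h2 1 2 (hmem 1 (by omega) (by omega)) (hmem 2 (by omega) (by omega)) (by omega)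
    obtain ⟨p13, n13⟩ := h2 1 3 (hmem 1 (by omega) (by omega)) (hmem 3 (by omega) (by omega)) (by omega)
    obtain ⟨p23, n23⟩ := h2 2 3 (hmem 2 (by omega) (by omega)) (hmem 3 (by omega) (by omega)) (by omega)
    exact six_types e G hAdj σ' hsym φ 1 2 3 (by omega) (by omega) p12 n12 p13 n13 p23 n23
  · obtain ⟨r, rfl⟩ := ho
    have hr : 2 ≤ r := by omega
    have hodd : ¬ Even (2 * r + 1) := by simp [Nat.even_iff]
    have hmem : ∀ i : ℕ, i ≤ r → ((i : ℤ) ∈ colourSet (2 * r + 1)) := by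
      intro i hir
      simp only [colourSet, if_neg hodd, Set.mem_setOf_eq, Int.natAbs_natCast]
      omega
    obtain ⟨p01, n01⟩ := h2 0 1 (hmem 0 (by omega)) (hmem 1 (by omega)) (by omega)
    obtain ⟨p02, n02⟩ := h2 0 2 (hmem 0 (by omega)) (hmem 2 (by omega)) (by omega)
    obtain ⟨p12, n12⟩ := h2 1 2 (hmem 1 (by omega)) (hmem 2 (by omega)) (by omega)
    exact six_types e G hAdj σ' hsym φ 0 1 2 (by omega) (by omega) p01 n01 p02 n02 p12 n12

private lemma key_psi
    (hAdj : ∀ u v, G.Adj u v ↔ pawG.Adj (e u) (e v))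
    (hσ : ∀ u v, σ u v = pawSig (e u) (e v)) : psi G σ = 4 := by
  apply IsGreatest.csSup_eq
  constructor
  · exact key_admits4 e G σ hAdj hσ
  · intro k hk
    by_contra h
    push_neg at h
    exact key_not_admits e G σ hAdj k (by omega) hk

end Key

/-- There is a signed graph whose underlying graph has no induced `P₄`,
`P₃ + P₂`, or `P₂ + P₂ + P₂`, yet `ψ > ω` and `ψ > χ`; in particular it is neither
`(ψ,ω)`-perfect nor `(ψ,χ)`-perfect. -/
theorem statement18 :
    ∃ (n : ℕ) (G : SimpleGraph (Fin n)) (σ : Fin n → Fin n → ℤ),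
      IsSignature σ ∧
      ¬HasInducedCopy G patP4 ∧ ¬HasInducedCopy G patP3P2 ∧ ¬HasInducedCopy G patP2P2P2 ∧
      G.cliqueNum < psi G σ ∧ chi G σ < psi G σ ∧
      ¬(∀ s : Set (Fin n),
          psi (G.induce s) (fun a b => σ a.1 b.1) = (G.induce s).cliqueNum) ∧
      ¬(∀ s : Set (Fin n),
          psi (G.induce s) (fun a b => σ a.1 b.1) =
            chi (G.induce s) (fun a b => σ a.1 b.1)) := by
  refine ⟨4, pawG, pawSig, ?_, ?_, ?_, ?_, ?_, ?_, ?_, ?_⟩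
  · constructor <;> decide
  · unfold HasInducedCopy
    decide
  · rintro ⟨f, hf, -⟩
    have := Fintype.card_le_of_injective f hf
    simp at this
  · rintro ⟨f, hf, -⟩
    have := Fintype.card_le_of_injective f hf
    simp at this
  · have h1 := key_clique (Equiv.refl (Fin 4)) pawG (fun u v => Iff.rfl)
    have h2 := key_psi (Equiv.refl (Fin 4)) pawG pawSig (fun u v => Iff.rfl)
      (fun u v => rfl)
    omega
  · have h1 := key_chi (Equiv.refl (Fin 4)) pawG pawSig (fun u v => Iff.rfl)
      (fun u v => rfl)
    have h2 := key_psi (Equiv.refl (Fin 4)) pawG pawSig (fun u v => Iff.rfl)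
      (fun u v => rfl)
    omega
  · intro h
    have hs := h Set.univ
    have h1 := key_clique (Equiv.Set.univ (Fin 4)) (pawG.induce Set.univ)
      (fun u v => Iff.rfl)
    have h2 := key_psi (Equiv.Set.univ (Fin 4)) (pawG.induce Set.univ)
      (fun a b => pawSig a.1 b.1) (fun u v => Iff.rfl) (fun u v => rfl)
    omega
  · intro h
    have hs := h Set.univ
    have h1 := key_chi (Equiv.Set.univ (Fin 4)) (pawG.induce Set.univ)
      (fun a b => pawSig a.1 b.1) (fun u v => Iff.rfl) (fun u v => rfl)
    have h2 := key_psi (Equiv.Set.univ (Fin 4)) (pawG.induce Set.univ)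
      (fun a b => pawSig a.1 b.1) (fun u v => Iff.rfl) (fun u v => rfl)
    omega
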